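/- Let n ≥ i ≥ 1 be natural numbers and let 2k = 2^v be the largest power of 2 dividing i (so v = padicValNat 2 i and k = 2^(v-1), with the convention that if i is odd one takes 2k = 1, handled separately). If i is even and 2k is the largest power of 2 dividing i, then C(n, 2k) ≢ C(n - i, 2k) (mod 2). -/

import Mathlib

lemma choose_two_pow_mod_two (n v : ℕ) :
    Nat.choose n (2 ^ v) % 2 = (n / 2 ^ v) % 2 := by
  induction v generalizing n with
  | zero => simp [Nat.choose_one_right]
  | succ v ih =>
    have : Fact (Nat.Prime 2) := ⟨Nat.prime_two⟩
    have h := @Choose.choose_modEq_choose_mod_mul_choose_div_nat n (2 ^ (v + 1)) 2 _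
    have h2 : 2 ^ (v + 1) % 2 = 0 := by
      simp [Nat.pow_succ, Nat.mul_mod_left]
    have h3 : 2 ^ (v + 1) / 2 = 2 ^ v := by
      rw [Nat.pow_succ]; exact Nat.mul_div_cancel _ (by norm_num)
    rw [h2, h3, Nat.choose_zero_right, one_mul] at h
    rw [Nat.ModEq] at h
    rw [h, ih (n / 2), Nat.div_div_eq_div_mul, ← Nat.pow_succ']

/-- For `1 ≤ i ≤ n` with `i` even, and `2k = 2^(padicValNat 2 i)` the largest
power of two dividing `i`, the binomial coefficients `C(n, 2k)` and
`C(n-i, 2k)` have different parities. -/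
theorem choose_ne_mod_two (n i : ℕ) (h1 : 1 ≤ i) (hin : i ≤ n) (heven : Even i) :
    Nat.choose n (2 ^ padicValNat 2 i) % 2 ≠
      Nat.choose (n - i) (2 ^ padicValNat 2 i) % 2 := by
  have : Fact (Nat.Prime 2) := ⟨Nat.prime_two⟩
  set v := padicValNat 2 i with hv
  have hdvd : 2 ^ v ∣ i := pow_padicValNat_dvd
  have hndvd : ¬ 2 ^ (v + 1) ∣ i := pow_succ_padicValNat_not_dvd (by omega)
  obtain ⟨q, hq⟩ := hdvd
  have hqodd : q % 2 = 1 := by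
    rcases Nat.even_or_odd q with he | ho
    · exfalso; obtain ⟨r, hr⟩ := he
      exact hndvd ⟨r, by rw [hq, hr]; ring⟩
    · exact Nat.odd_iff.mp ho
  rw [choose_two_pow_mod_two, choose_two_pow_mod_two]
  have hpos : 0 < 2 ^ v := pow_pos (by norm_num) v
  have hsub : (n - i) / 2 ^ v = n / 2 ^ v - q := by
    rw [hq, Nat.sub_mul_div]
  have hle : q ≤ n / 2 ^ v := by
    rw [Nat.le_div_iff_mul_le hpos]
    calc q * 2 ^ v = i := by rw [hq, mul_comm]
      _ ≤ n := hin
  rw [hsub]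
  omega
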